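/- For the torus immersion φ(s,t) = (e^{is}, e^{it}) into S³×S³ with the nearly Kähler metric g, one has g(φ_s,φ_s) = g(φ_t,φ_t) = 4/3 and g(φ_s,φ_t) = −2/3; in particular the induced metric is flat. -/

import Mathlib

open Quaternion

noncomputable section

/-- The almost complex structure `J` at the point `(p, q)` of `S³ × S³`,
acting on `T_p S³ × T_q S³ ⊆ ℍ × ℍ`:
`J(U,V) = (1/√3)(2pq⁻¹V − U, −2qp⁻¹U + V)`. -/
def Jmap (p q : ℍ[ℝ]) (W : ℍ[ℝ] × ℍ[ℝ]) : ℍ[ℝ] × ℍ[ℝ] :=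
  (Real.sqrt 3)⁻¹ •
    ((2 : ℝ) • (p * q⁻¹ * W.2) - W.1, -((2 : ℝ) • (q * p⁻¹ * W.1)) + W.2)

/-- The almost product structure `P` at `(p, q)`: `P(U,V) = (pq⁻¹V, qp⁻¹U)`. -/
def Pmap (p q : ℍ[ℝ]) (W : ℍ[ℝ] × ℍ[ℝ]) : ℍ[ℝ] × ℍ[ℝ] :=
  (p * q⁻¹ * W.2, q * p⁻¹ * W.1)

/-- The product round metric on `S³ × S³` (on tangent pairs). -/
def prodInner (X Y : ℍ[ℝ] × ℍ[ℝ]) : ℝ :=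
  (inner ℝ X.1 Y.1 : ℝ) + (inner ℝ X.2 Y.2 : ℝ)

/-- The nearly Kähler metric `g(X,Y) = (1/2)(⟨X,Y⟩ + ⟨JX,JY⟩)` at `(p,q)`. -/
def gmet (p q : ℍ[ℝ]) (X Y : ℍ[ℝ] × ℍ[ℝ]) : ℝ :=
  (1 / 2) * (prodInner X Y + prodInner (Jmap p q X) (Jmap p q Y))

/-- The point `e^{is} = cos s + i sin s` of `S³`. -/
def ep (s : ℝ) : ℍ[ℝ] := ⟨Real.cos s, Real.sin s, 0, 0⟩

/-- The velocity `−sin s + i cos s` of `s ↦ e^{is}`. -/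
def eU (s : ℝ) : ℍ[ℝ] := ⟨-Real.sin s, Real.cos s, 0, 0⟩

lemma ep_inv (t : ℝ) : (ep t)⁻¹ = ⟨Real.cos t, -Real.sin t, 0, 0⟩ := by
  rw [Quaternion.inv_def]
  ext <;> simp only [Quaternion.normSq_def', Quaternion.re_mul, Quaternion.imI_mul, Quaternion.imJ_mul, Quaternion.imK_mul, Quaternion.re_star, Quaternion.imI_star, Quaternion.imJ_star, Quaternion.imK_star, Quaternion.re_smul, Quaternion.imI_smul, Quaternion.imJ_smul, Quaternion.imK_smul, Quaternion.re_neg, Quaternion.imI_neg, Quaternion.imJ_neg, Quaternion.imK_neg, Quaternion.re_sub, Quaternion.imI_sub, Quaternion.imJ_sub, Quaternion.imK_sub, Quaternion.re_add, Quaternion.imI_add, Quaternion.imJ_add, Quaternion.imK_add, Quaternion.re_zero, Quaternion.imI_zero, Quaternion.imJ_zero, Quaternion.imK_zero, smul_eq_mul] <;> simp [ep, Real.cos_sq_add_sin_sq]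

/-- `e^{it} e^{-is} · (i e^{is}) = i e^{it}`. -/
lemma key (s t : ℝ) : ep t * (ep s)⁻¹ * eU s = eU t := by
  have hs := Real.sin_sq_add_cos_sq s
  apply Quaternion.ext <;> simp only [Quaternion.re_mul, Quaternion.imI_mul, Quaternion.imJ_mul, Quaternion.imK_mul, Quaternion.re_star, Quaternion.imI_star, Quaternion.imJ_star, Quaternion.imK_star, Quaternion.re_smul, Quaternion.imI_smul, Quaternion.imJ_smul, Quaternion.imK_smul, Quaternion.re_neg, Quaternion.imI_neg, Quaternion.imJ_neg, Quaternion.imK_neg, Quaternion.re_sub, Quaternion.imI_sub, Quaternion.imJ_sub, Quaternion.imK_sub, Quaternion.re_add, Quaternion.imI_add, Quaternion.imJ_add, Quaternion.imK_add, Quaternion.re_zero, Quaternion.imI_zero, Quaternion.imJ_zero, Quaternion.imK_zero, smul_eq_mul] <;> simp only [ep_inv] <;> simp [ep, eU] <;> ring_nf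
  · linear_combination (-Real.sin t) * hs
  · linear_combination (Real.cos t) * hs

/-- for the torus immersion `φ(s,t) = (e^{is}, e^{it})`,
`g(φ_s,φ_s) = g(φ_t,φ_t) = 4/3` and `g(φ_s,φ_t) = −2/3` (in particular these
are constant, so the induced metric is flat). -/
theorem stmt_11 (s t : ℝ) :
    gmet (ep s) (ep t) ((eU s, 0)) ((eU s, 0)) = 4 / 3 ∧
    gmet (ep s) (ep t) (((0 : ℍ[ℝ]), eU t)) (((0 : ℍ[ℝ]), eU t)) = 4 / 3 ∧
    gmet (ep s) (ep t) ((eU s, 0)) (((0 : ℍ[ℝ]), eU t)) = -(2 / 3) := by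
  have hr : (Real.sqrt 3)⁻¹ ^ 2 = 3⁻¹ := by
    rw [← Real.sqrt_inv]; exact Real.sq_sqrt (by norm_num)
  have hs := Real.sin_sq_add_cos_sq s
  have ht := Real.sin_sq_add_cos_sq t
  refine ⟨?_, ?_, ?_⟩ <;>
      simp only [gmet, prodInner, Jmap, mul_zero, smul_zero, zero_sub, neg_zero,
        zero_add, add_zero, key] <;>
      simp only [Quaternion.inner_def, Prod.smul_mk, Prod.neg_mk, Prod.mk_add_mk, Prod.mk_sub_mk, Quaternion.re_mul, Quaternion.imI_mul, Quaternion.imJ_mul, Quaternion.imK_mul, Quaternion.re_star, Quaternion.imI_star, Quaternion.imJ_star, Quaternion.imK_star, Quaternion.re_smul, Quaternion.imI_smul, Quaternion.imJ_smul, Quaternion.imK_smul, Quaternion.re_neg, Quaternion.imI_neg, Quaternion.imJ_neg, Quaternion.imK_neg, Quaternion.re_sub, Quaternion.imI_sub, Quaternion.imJ_sub, Quaternion.imK_sub, Quaternion.re_add, Quaternion.imI_add, Quaternion.imJ_add, Quaternion.imK_add, Quaternion.re_zero, Quaternion.imI_zero, Quaternion.imJ_zero, Quaternion.imK_zero, smul_eq_mul]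 <;>
      simp [Quaternion.inner_def, eU, Quaternion.ext_iff] <;>
      ring_nf
  · linear_combination (1 / 2 + (Real.sqrt 3)⁻¹ ^ 2 / 2) * hs +
      2 * (Real.sqrt 3)⁻¹ ^ 2 * ht + (5 / 2) * hr
  · linear_combination (1 / 2 + (Real.sqrt 3)⁻¹ ^ 2 / 2) * ht +
      2 * (Real.sqrt 3)⁻¹ ^ 2 * hs + (5 / 2) * hr
  · linear_combination (-(Real.sqrt 3)⁻¹ ^ 2) * hs + (-(Real.sqrt 3)⁻¹ ^ 2) * ht - 2 * hr
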